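/- Under the hypotheses of the main theorem (φ additive, unital, bijective, satisfying the q_{n*}-conditions), Q_i := φ(P_i) is an idempotent in 𝔄': Q_iQ_i = Q_i, for i ∈ {1,2}. -/

import Mathlib

/-- The *-Jordan product `{A,B}_* = AB + BA*`. -/
def jstar {R : Type*} [Ring R] [StarRing R] (A B : R) : R := A * B + B * star A

/-- The iterated *-Jordan product `q_{n*}(x_1, ..., x_n)`. -/
def qstar {R : Type*} [Ring R] [StarRing R] : List R → R
  | [] => 0
  | x :: xs => xs.foldl jstar x

lemma foldl_ones {R : Type*} [Ring R] [StarRing R] (k : ℕ) :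
    (List.replicate k (1:R)).foldl jstar 1 = 2^k • (1:R) := by
  induction k with
  | zero => simp
  | succ k ih =>
    rw [List.replicate_succ', List.foldl_append]
    simp only [List.foldl_cons, List.foldl_nil, ih, jstar]
    rw [star_nsmul, star_one, mul_one, one_mul, pow_succ, mul_two, add_nsmul]

lemma qstar_rep {R : Type*} [Ring R] [StarRing R] (k : ℕ) (A B : R) :
    qstar (List.replicate k (1:R) ++ [A, B]) = 2^k • (A*B + B*star A) := by
  cases k with
  | zero => simp [qstar, jstar]
  | succ k =>
    rw [List.replicate_succ, List.cons_append]
    show (List.replicate k (1:R) ++ [A, B]).foldl jstar 1 = _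
    rw [List.foldl_append, foldl_ones]
    simp only [List.foldl_cons, List.foldl_nil, jstar, star_nsmul, star_one,
      smul_mul_assoc, one_mul, mul_smul_comm, mul_one]
    simp only [star_add, star_nsmul, add_mul, mul_add, smul_mul_assoc, mul_smul_comm,
      pow_succ, mul_two, add_nsmul, smul_add]

theorem stmt11 {𝔄 𝔄' : Type*} [CStarAlgebra 𝔄] [CStarAlgebra 𝔄']
    (n : ℕ) (hn : 2 ≤ n)
    (P₁ : 𝔄) (hproj : P₁ * P₁ = P₁) (hsa : star P₁ = P₁) (hne0 : P₁ ≠ 0) (hne1 : P₁ ≠ 1)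
    (φ : 𝔄 → 𝔄') (hbij : Function.Bijective φ) (hunital : φ 1 = 1) (hadd : ∀ A B : 𝔄, φ (A + B) = φ A + φ B)
    (hqI : ∀ A B : 𝔄, φ (qstar (List.replicate (n - 2) 1 ++ [A, B])) =
      qstar (List.replicate (n - 2) (φ 1) ++ [φ A, φ B]))
    (hqP : ∀ P ∈ ({P₁, 1 - P₁} : Set 𝔄), ∀ A B : 𝔄,
      φ (qstar (List.replicate (n - 2) P ++ [A, B])) =
      qstar (List.replicate (n - 2) (φ P) ++ [φ A, φ B])) :
    ∀ P ∈ ({P₁, 1 - P₁} : Set 𝔄), φ P * φ P = φ P := by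
  -- φ(0) = 0 and φ commutes with ℕ-scalars
  have hzero : φ 0 = 0 := by
    have := hadd 0 0
    simp only [add_zero] at this
    exact right_eq_add.mp this
  have hsmul : ∀ (m : ℕ) (x : 𝔄), φ (m • x) = m • φ x := by
    intro m x
    induction m with
    | zero => simpa using hzero
    | succ m ih => rw [succ_nsmul, hadd, ih, succ_nsmul]
  -- nsmul-cancellation in 𝔄'
  have hcancel : ∀ (x y : 𝔄'), 2^(n-2) • x = 2^(n-2) • y → x = y := by
    intro x y h
    have h2 : ((2:ℂ)^(n-2)) • x = ((2:ℂ)^(n-2)) • y := by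
      rw [show ((2:ℂ)^(n-2)) = ((2^(n-2) : ℕ) : ℂ) by push_cast; ring,
        Nat.cast_smul_eq_nsmul, Nat.cast_smul_eq_nsmul]
      exact h
    have hne : ((2:ℂ)^(n-2)) ≠ 0 := pow_ne_zero _ two_ne_zero
    have := congrArg (fun z => ((2:ℂ)^(n-2))⁻¹ • z) h2
    simpa [smul_smul, inv_mul_cancel₀ hne] using this
  intro P hP
  have hP2 : P * P = P := by
    rcases hP with h | h <;> subst h
    · exact hproj
    · have h : (1-P₁)*(1-P₁) = 1 - P₁ - P₁ + P₁*P₁ := by noncomm_ring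
      rw [h, hproj]; abel
  have hPs : star P = P := by
    rcases hP with h | h <;> subst h
    · exact hsa
    · simp [hsa]
  -- step 1: star (φ P) = φ P
  have h1 := hqI P 1
  rw [hunital, qstar_rep, qstar_rep] at h1
  rw [mul_one, one_mul, hPs, hsmul, hadd P P] at h1
  have hstar : star (φ P) = φ P := by
    have := hcancel _ _ h1
    rw [mul_one, one_mul] at this
    exact (add_left_cancel this).symm
  -- step 2: idempotency
  have h2 := hqI P P
  rw [hunital, qstar_rep, qstar_rep] at h2
  rw [hP2, hPs, hP2, hsmul, hadd P P, hstar] at h2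
  have h3 := hcancel _ _ h2
  -- h3 : φ P + φ P = φ P * φ P + φ P * φ P
  have h4 : ((2:ℂ)) • φ P = ((2:ℂ)) • (φ P * φ P) := by
    rw [show ((2:ℂ)) = ((2:ℕ) : ℂ) by norm_num, Nat.cast_smul_eq_nsmul,
      Nat.cast_smul_eq_nsmul, two_nsmul, two_nsmul]
    exact h3
  have := congrArg (fun z => ((2:ℂ))⁻¹ • z) h4
  simp only [smul_smul, inv_mul_cancel₀ (two_ne_zero (α := ℂ)), one_smul] at this
  exact this.symm
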